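/- Let n ∈ ℕ, p ∈ (1, ∞), let Ω ⊆ ℝ^n be a measurable set, let a : Ω → ℝ be measurable with a(x) ≥ m for a.e. x ∈ Ω for some constant m > 0, and let F, G : Ω → ℝ^n be measurable vector fields. If ∫_Ω a(x) ⟨H_{p−1}(F(x)) − H_{p−1}(G(x)), F(x) − G(x)⟩ dx = 0 (the integrand being non-negative a.e.), then H_{p/2}(F(x)) = H_{p/2}(G(x)) for a.e. x ∈ Ω. -/

import Mathlib

open MeasureTheory
open scoped InnerProductSpace

/-- The map `H_γ : ℝ^n → ℝ^n`, `H_γ(ξ) = (|ξ|−1)₊^γ · ξ/|ξ|` for `ξ ≠ 0`, `H_γ(0) = 0`. -/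
noncomputable def Hfun {n : ℕ} (γ : ℝ) (ξ : EuclideanSpace ℝ (Fin n)) :
    EuclideanSpace ℝ (Fin n) :=
  open Classical in
  if ξ = (0 : EuclideanSpace ℝ (Fin n)) then 0 else (max (‖ξ‖ - 1) 0) ^ γ • ‖ξ‖⁻¹ • ξ

/-- Let `p ∈ (1, ∞)`, `Ω ⊆ ℝ^n` measurable, `a : Ω → ℝ` measurable
with `a ≥ m > 0` a.e. on `Ω`, and let `F, G : Ω → ℝ^n` be measurable. If
`∫_Ω a(x) ⟨H_{p−1}(F(x)) − H_{p−1}(G(x)), F(x) − G(x)⟩ dx = 0` (the integrand being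
non-negative a.e.), then `H_{p/2}(F(x)) = H_{p/2}(G(x))` for a.e. `x ∈ Ω`. -/
lemma Hfun_eq_smul {n : ℕ} {γ : ℝ} (hγ : 0 < γ) (ξ : EuclideanSpace ℝ (Fin n)) :
    Hfun γ ξ = ((max (‖ξ‖ - 1) 0) ^ γ * ‖ξ‖⁻¹) • ξ := by
  unfold Hfun
  split_ifs with h
  · simp [h]
  · rw [smul_smul]

lemma Hfun_eq_zero {n : ℕ} {γ : ℝ} (hγ : 0 < γ) {ξ : EuclideanSpace ℝ (Fin n)}
    (h : ‖ξ‖ ≤ 1) : Hfun γ ξ = 0 := by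
  rw [Hfun_eq_smul hγ, max_eq_right (by linarith), Real.zero_rpow hγ.ne', zero_mul, zero_smul]

lemma measurable_Hfun {n : ℕ} (γ : ℝ) : Measurable (Hfun γ (n := n)) := by
  unfold Hfun
  refine Measurable.ite (MeasurableSet.singleton 0) measurable_const ?_
  exact (((measurable_norm.sub measurable_const).max measurable_const).pow measurable_const).smul
    (measurable_norm.inv.smul measurable_id)

set_option maxHeartbeats 1600000 in
lemma helper {n : ℕ} {γ : ℝ} (hγ : 0 < γ) (ξ η : EuclideanSpace ℝ (Fin n))
    (hs : 1 < ‖ξ‖) (h : ⟪Hfun γ ξ - Hfun γ η, ξ - η⟫_ℝ ≤ 0) : ξ = η := by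
  have hs0 : (0:ℝ) < ‖ξ‖ := by linarith
  have ht0 : (0:ℝ) ≤ ‖η‖ := norm_nonneg _
  have hc : ⟪ξ, η⟫_ℝ ≤ ‖ξ‖ * ‖η‖ := real_inner_le_norm ξ η
  rw [Hfun_eq_smul hγ, Hfun_eq_smul hγ, inner_sub_left, inner_sub_right, inner_sub_right,
    real_inner_smul_left, real_inner_smul_left, real_inner_smul_left, real_inner_smul_left,
    real_inner_self_eq_norm_sq, real_inner_self_eq_norm_sq] at h
  simp only [real_inner_comm ξ η] at h
  set Fs := max (‖ξ‖ - 1) 0 ^ γ with hFs_def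
  set Ft := max (‖η‖ - 1) 0 ^ γ with hFt_def
  clear_value Fs Ft
  have hFs : Fs = (‖ξ‖ - 1) ^ γ := by rw [hFs_def, max_eq_left (by linarith)]
  have hFs0 : 0 < Fs := by rw [hFs]; exact Real.rpow_pos_of_pos (by linarith) γ
  have hsinv : ‖ξ‖⁻¹ * ‖ξ‖ = 1 := inv_mul_cancel₀ hs0.ne'
  by_cases ht1 : ‖η‖ ≤ 1
  · exfalso
    have hFt : Ft = 0 := by
      rw [hFt_def, max_eq_right (by linarith), Real.zero_rpow hγ.ne']
    rw [hFt] at h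
    have hcs : ⟪ξ, η⟫_ℝ < ‖ξ‖ ^ 2 := by nlinarith
    nlinarith [mul_pos (mul_pos hFs0 (inv_pos.2 hs0)) (sub_pos.2 hcs)]
  · push_neg at ht1
    have ht0' : (0:ℝ) < ‖η‖ := by linarith
    have hFt : Ft = (‖η‖ - 1) ^ γ := by rw [hFt_def, max_eq_left (by linarith)]
    have hFt0 : 0 < Ft := by rw [hFt]; exact Real.rpow_pos_of_pos (by linarith) γ
    have htinv : ‖η‖⁻¹ * ‖η‖ = 1 := inv_mul_cancel₀ ht0'.ne'
    have e1 : Fs * ‖ξ‖⁻¹ * ‖ξ‖ ^ 2 = Fs * ‖ξ‖ := by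
      rw [sq]; field_simp
    have e2 : Ft * ‖η‖⁻¹ * ‖η‖ ^ 2 = Ft * ‖η‖ := by
      rw [sq]; field_simp
    rw [e1, e2] at h
    have h3 : Fs * ‖ξ‖⁻¹ * ⟪ξ, η⟫_ℝ ≤ Fs * ‖η‖ := by
      have := mul_le_mul_of_nonneg_left hc
        (mul_nonneg hFs0.le (inv_pos.2 hs0).le)
      have e3 : Fs * ‖ξ‖⁻¹ * (‖ξ‖ * ‖η‖) = Fs * ‖η‖ := by
        field_simp
      linarith [this, e3.le, e3.ge]
    have h4 : Ft * ‖η‖⁻¹ * ⟪ξ, η⟫_ℝ ≤ Ft * ‖ξ‖ := by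
      have := mul_le_mul_of_nonneg_left hc
        (mul_nonneg hFt0.le (inv_pos.2 ht0').le)
      have e4 : Ft * ‖η‖⁻¹ * (‖ξ‖ * ‖η‖) = Ft * ‖ξ‖ := by
        field_simp
      linarith [this, e4.le, e4.ge]
    have hkey : (Fs - Ft) * (‖ξ‖ - ‖η‖) ≤ 0 := by nlinarith [h, h3, h4]
    have hst : ‖ξ‖ = ‖η‖ := by
      rcases lt_trichotomy ‖ξ‖ ‖η‖ with h1 | h1 | h1
      · have hlt : Fs < Ft := by
          rw [hFs, hFt]; exact Real.rpow_lt_rpow (by linarith) (by linarith) hγ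
        nlinarith [mul_pos (sub_pos.2 hlt) (sub_pos.2 h1)]
      · exact h1
      · have hlt : Ft < Fs := by
          rw [hFs, hFt]; exact Real.rpow_lt_rpow (by linarith) (by linarith) hγ
        nlinarith [mul_pos (sub_pos.2 hlt) (sub_pos.2 h1)]
    have hFtFs : Ft = Fs := by rw [hFs, hFt, hst]
    rw [← hst, hFtFs] at h
    -- h : Fs * ‖ξ‖ - Fs * ‖ξ‖⁻¹ * d - (Fs * ‖ξ‖⁻¹ * d - Fs * ‖ξ‖) ≤ 0
    have e3 : ‖ξ‖ * (Fs * ‖ξ‖⁻¹ * ⟪ξ, η⟫_ℝ) = Fs * ⟪ξ, η⟫_ℝ := by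
      field_simp
    have h5 : ‖ξ‖ * (Fs * ‖ξ‖ - Fs * ‖ξ‖⁻¹ * ⟪ξ, η⟫_ℝ -
        (Fs * ‖ξ‖⁻¹ * ⟪ξ, η⟫_ℝ - Fs * ‖ξ‖)) ≤ 0 := mul_nonpos_of_nonneg_of_nonpos hs0.le h
    have h6 : Fs * ‖ξ‖ ^ 2 ≤ Fs * ⟪ξ, η⟫_ℝ := by nlinarith [h5, e3]
    have h7 : ‖ξ‖ ^ 2 ≤ ⟪ξ, η⟫_ℝ := le_of_mul_le_mul_left h6 hFs0
    have hnormsq : ‖ξ - η‖ ^ 2 = ‖ξ‖ ^ 2 - 2 * ⟪ξ, η⟫_ℝ + ‖η‖ ^ 2 := by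
      rw [@norm_sub_sq_real]
    have h8 : ‖ξ - η‖ ^ 2 ≤ 0 := by rw [hnormsq, ← hst]; linarith
    have h9 : ‖ξ - η‖ = 0 := by nlinarith [norm_nonneg (ξ - η)]
    exact sub_eq_zero.1 (norm_eq_zero.1 h9)

lemma pointwise {n : ℕ} {γ γ' : ℝ} (hγ : 0 < γ) (hγ' : 0 < γ')
    (ξ η : EuclideanSpace ℝ (Fin n))
    (h : ⟪Hfun γ ξ - Hfun γ η, ξ - η⟫_ℝ ≤ 0) : Hfun γ' ξ = Hfun γ' η := by
  by_cases h1 : 1 < ‖ξ‖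
  · rw [helper hγ ξ η h1 h]
  · by_cases h2 : 1 < ‖η‖
    · have hsym : ⟪Hfun γ η - Hfun γ ξ, η - ξ⟫_ℝ ≤ 0 := by
        rw [show Hfun γ η - Hfun γ ξ = -(Hfun γ ξ - Hfun γ η) by abel,
          show η - ξ = -(ξ - η) by abel, inner_neg_neg]
        exact h
      rw [helper hγ η ξ h2 hsym]
    · push_neg at h1 h2
      rw [Hfun_eq_zero hγ' h1, Hfun_eq_zero hγ' h2]

theorem stmt_12 (n : ℕ) (p : ℝ) (hp : 1 < p)
    (Ω : Set (EuclideanSpace ℝ (Fin n))) (hΩ : MeasurableSet Ω)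
    (a : EuclideanSpace ℝ (Fin n) → ℝ) (ha : Measurable a)
    (m : ℝ) (hm : 0 < m) (ham : ∀ᵐ x ∂(volume.restrict Ω), m ≤ a x)
    (F G : EuclideanSpace ℝ (Fin n) → EuclideanSpace ℝ (Fin n))
    (hF : Measurable F) (hG : Measurable G)
    (hint : ∫⁻ x in Ω,
        ENNReal.ofReal
          (a x * ⟪Hfun (p - 1) (F x) - Hfun (p - 1) (G x), F x - G x⟫_ℝ) = 0) :
    ∀ᵐ x ∂(volume.restrict Ω), Hfun (p / 2) (F x) = Hfun (p / 2) (G x) := by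
  have hmeas : Measurable fun x =>
      ENNReal.ofReal
        (a x * ⟪Hfun (p - 1) (F x) - Hfun (p - 1) (G x), F x - G x⟫_ℝ) := by
    apply Measurable.ennreal_ofReal
    exact ha.mul ((((measurable_Hfun (p-1)).comp hF).sub
      ((measurable_Hfun (p-1)).comp hG)).inner (hF.sub hG))
  rw [lintegral_eq_zero_iff hmeas] at hint
  filter_upwards [hint, ham] with x hx hax
  have h0 : a x * ⟪Hfun (p - 1) (F x) - Hfun (p - 1) (G x), F x - G x⟫_ℝ ≤ 0 := by
    simpa [ENNReal.ofReal_eq_zero] using hx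
  have hinner : ⟪Hfun (p - 1) (F x) - Hfun (p - 1) (G x), F x - G x⟫_ℝ ≤ 0 := by
    nlinarith
  exact pointwise (by linarith) (by linarith) (F x) (G x) hinner
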